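/- arXiv:0910.2582 — 4 statements merged into one kernel-verified Lean document; each statement's English description precedes it below -/
import Mathlib

section
/- Let P ≥ 1 be a positive integer, let s : Fin P → Fin P → ℕ, fix an index i, let S_i := Σ_{j} s(i,j), and assume Σ_{j} s(j,i) = S_i (PE i sends and receives S_i elements in total). Let A_i be a natural number with A_i > P, and let k be a positive integer with (k : ℝ) ≥ S_i / (A_i − P). Then for every round r with 1 ≤ r ≤ k, the number of elements received by PE i in the first r rounds exceeds the number of elements sent by PE i in the first r−1 rounds by at most A_i; formally, Σ_{j=1}^{P} ⌈r·s(j,i)/k⌉ − Σ_{j=1}^{P} ⌈(r−1)·s(i,j)/k⌉ ≤ A_i (ceilings taken of the rational quotients). -/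
/-- Algorithm `EqualRounds` for the in-place all-to-all operation:
if `k ≥ S_i / (A_i - P)` (with `A_i > P` buffer blocks on PE `i`), then in every
round `1 ≤ r ≤ k`, the number of elements received by PE `i` in the first `r`
rounds exceeds the number of elements sent by PE `i` in the first `r - 1`
rounds by at most `A_i`. -/
theorem equalRounds_buffer_bound
    (P : ℕ) (hP : 1 ≤ P) (s : Fin P → Fin P → ℕ) (i : Fin P)
    (S : ℕ) (hS : S = ∑ j, s i j) (hrecv : ∑ j, s j i = S)
    (A : ℕ) (hA : P < A)
    (k : ℕ) (hk : 1 ≤ k) (hkS : (k : ℝ) ≥ (S : ℝ) / ((A : ℝ) - (P : ℝ)))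
    (r : ℕ) (hr1 : 1 ≤ r) (hrk : r ≤ k) :
    (∑ j, ⌈((r * s j i : ℕ) : ℚ) / (k : ℚ)⌉)
      - (∑ j, ⌈(((r - 1) * s i j : ℕ) : ℚ) / (k : ℚ)⌉) ≤ (A : ℤ) := by
  have hk0 : (0:ℚ) < (k:ℚ) := by exact_mod_cast hk
  -- S ≤ k * (A - P) over ℕ
  have hAP : (0:ℝ) < (A:ℝ) - (P:ℝ) := by
    have : (P:ℝ) < (A:ℝ) := by exact_mod_cast hA
    linarith
  have hSk : (S:ℝ) ≤ (k:ℝ) * ((A:ℝ) - (P:ℝ)) := by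
    rw [ge_iff_le, div_le_iff₀ hAP] at hkS
    linarith
  have hSkQ : (S:ℚ) / (k:ℚ) + (P:ℚ) ≤ (A:ℚ) := by
    have h1 : (S:ℚ) ≤ (k:ℚ) * ((A:ℚ) - (P:ℚ)) := by
      have : (S:ℝ) ≤ ((k:ℕ):ℝ) * ((A:ℝ) - (P:ℝ)) := hSk
      have h2 : (S:ℝ) ≤ (((k * (A - P) : ℕ)):ℝ) := by
        push_cast [Nat.cast_sub hA.le] at this ⊢
        linarith
      have h3 : S ≤ k * (A - P) := by exact_mod_cast h2
      have : (S:ℚ) ≤ (((k * (A - P) : ℕ)):ℚ) := by exact_mod_cast h3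
      push_cast [Nat.cast_sub hA.le] at this
      linarith
    rw [div_add' _ _ _ (ne_of_gt hk0), div_le_iff₀ hk0]
    ring_nf
    ring_nf at h1
    linarith
  set L1 : ℤ := ∑ j, ⌈((r * s j i : ℕ) : ℚ) / (k : ℚ)⌉ with hL1
  set L2 : ℤ := ∑ j, ⌈(((r - 1) * s i j : ℕ) : ℚ) / (k : ℚ)⌉ with hL2
  have hne : (Finset.univ : Finset (Fin P)).Nonempty := by
    exact Finset.univ_nonempty_iff.mpr (Fin.pos_iff_nonempty.mp hP)
  have hup : (L1:ℚ) < (↑r * (S:ℚ)) / k + P := by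
    have hlt : (L1:ℚ) < ∑ j, (((r * s j i : ℕ) : ℚ) / (k : ℚ) + 1) := by
      rw [hL1]
      push_cast
      exact Finset.sum_lt_sum_of_nonempty hne (fun j _ => Int.ceil_lt_add_one _)
    calc (L1:ℚ) < ∑ j, (((r * s j i : ℕ) : ℚ) / (k : ℚ) + 1) := hlt
      _ = (↑r * (S:ℚ)) / k + P := by
          rw [Finset.sum_add_distrib, ← Finset.sum_div]
          push_cast
          rw [← Finset.mul_sum]
          have : (∑ j, ((s j i : ℚ))) = (S:ℚ) := by exact_mod_cast congrArg (Nat.cast (R := ℚ)) hrecv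
          rw [this]
          simp [Finset.card_univ]
  have hlo : ((↑r - 1) * (S:ℚ)) / k ≤ (L2:ℚ) := by
    have : (∑ j, (((r - 1) * s i j : ℕ) : ℚ) / (k : ℚ)) ≤ (L2:ℚ) := by
      rw [hL2]
      push_cast
      exact Finset.sum_le_sum (fun j _ => Int.le_ceil _)
    refine le_trans (le_of_eq ?_) this
    rw [← Finset.sum_div]
    congr 1
    have hs : (∑ j, ((s i j : ℚ))) = (S:ℚ) := by
      rw [hS]; push_cast; ring
    push_cast [Nat.cast_sub hr1]
    rw [← Finset.mul_sum, hs]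
  have key : (L1:ℚ) - (L2:ℚ) < (A:ℚ) := by
    have : (↑r * (S:ℚ)) / k - ((↑r - 1) * (S:ℚ)) / k = (S:ℚ)/k := by
      field_simp; ring
    nlinarith [hup, hlo, hSkQ]
  have : ((L1 - L2 : ℤ):ℚ) < ((A:ℤ):ℚ) := by push_cast; linarith
  exact le_of_lt (by exact_mod_cast this)
end

section
/- Let P ≥ 1 and k ≥ 1 be positive integers, let s : Fin P → Fin P → ℕ, fix an index i, and let S_i := Σ_j s(i,j). Then for every round r with 1 ≤ r ≤ k, the number of elements PE i sends in round r is at most S_i/k + P; formally, Σ_{j=1}^{P} ( ⌈r·s(i,j)/k⌉ − ⌈(r−1)·s(i,j)/k⌉ ) ≤ S_i/k + P, where the inequality is between real numbers and the ceilings are of rational quotients. -/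
/-- Algorithm `EqualRounds`: in every round `1 ≤ r ≤ k`, the number of elements
sent by PE `i` (namely `∑_j (⌈r·s(i,j)/k⌉ - ⌈(r-1)·s(i,j)/k⌉)`) is at most
`S_i / k + P`, as real numbers. -/
theorem equalRounds_round_send_bound
    (P : ℕ) (hP : 1 ≤ P) (k : ℕ) (hk : 1 ≤ k)
    (s : Fin P → Fin P → ℕ) (i : Fin P)
    (S : ℕ) (hS : S = ∑ j, s i j)
    (r : ℕ) (hr1 : 1 ≤ r) (hrk : r ≤ k) :
    ((∑ j, (⌈((r * s i j : ℕ) : ℚ) / (k : ℚ)⌉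
        - ⌈(((r - 1) * s i j : ℕ) : ℚ) / (k : ℚ)⌉) : ℤ) : ℝ)
      ≤ (S : ℝ) / (k : ℝ) + (P : ℝ) := by
  have hkQ : (0 : ℚ) < (k : ℚ) := by exact_mod_cast hk
  have key : ((∑ j, (⌈((r * s i j : ℕ) : ℚ) / (k : ℚ)⌉
        - ⌈(((r - 1) * s i j : ℕ) : ℚ) / (k : ℚ)⌉) : ℤ) : ℚ)
      ≤ (S : ℚ) / (k : ℚ) + (P : ℚ) := by
    have hterm : ∀ j : Fin P,
        ((⌈((r * s i j : ℕ) : ℚ) / (k : ℚ)⌉ : ℚ)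
          - (⌈(((r - 1) * s i j : ℕ) : ℚ) / (k : ℚ)⌉ : ℚ))
        ≤ (s i j : ℚ) / (k : ℚ) + 1 := by
      intro j
      have hx : ((r * s i j : ℕ) : ℚ) / (k : ℚ)
          = (((r - 1) * s i j : ℕ) : ℚ) / (k : ℚ) + (s i j : ℚ) / (k : ℚ) := by
        rw [← add_div]
        congr 1
        have : r * s i j = (r - 1) * s i j + s i j := by
          cases' Nat.exists_eq_add_of_le hr1 with m hm
          subst hm; simp [Nat.add_sub_cancel_left]; ring
        rw [this]; push_cast; ring
      have h1 : (⌈((r * s i j : ℕ) : ℚ) / (k : ℚ)⌉ : ℚ)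
          < ((r * s i j : ℕ) : ℚ) / (k : ℚ) + 1 := Int.ceil_lt_add_one _
      have h2 : (((r - 1) * s i j : ℕ) : ℚ) / (k : ℚ)
          ≤ (⌈(((r - 1) * s i j : ℕ) : ℚ) / (k : ℚ)⌉ : ℚ) := Int.le_ceil _
      linarith
    rw [Int.cast_sum]
    simp only [Int.cast_sub]
    calc (∑ j, ((⌈((r * s i j : ℕ) : ℚ) / (k : ℚ)⌉ : ℚ)
          - (⌈(((r - 1) * s i j : ℕ) : ℚ) / (k : ℚ)⌉ : ℚ)))
        ≤ ∑ j, ((s i j : ℚ) / (k : ℚ) + 1) := Finset.sum_le_sum fun j _ => hterm j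
      _ = (S : ℚ) / (k : ℚ) + (P : ℚ) := by
          rw [Finset.sum_add_distrib, ← Finset.sum_div, hS]
          push_cast
          simp
  have key' := (Rat.cast_le (K := ℝ)).mpr key
  push_cast at key' ⊢
  convert key' using 2 <;> push_cast <;> ring
end

section
/- Let P ≥ 1 and k ≥ 1 be positive integers, let s : Fin P → Fin P → ℕ, fix an index i, let S_i := Σ_j s(i,j) and assume Σ_j s(j,i) = S_i. For each round r (1 ≤ r ≤ k) define sent_i(r) := Σ_j ( ⌈r·s(i,j)/k⌉ − ⌈(r−1)·s(i,j)/k⌉ ) and recv_i(r) := Σ_j ( ⌈r·s(j,i)/k⌉ − ⌈(r−1)·s(j,i)/k⌉ ). Then the total communication cost of PE i over all k rounds satisfies Σ_{r=1}^{k} max(sent_i(r), recv_i(r)) ≤ S_i + k·P. -/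
/-- Algorithm `EqualRounds`: the total communication cost of PE `i` over all `k`
rounds (the cost of a round being the maximum of the number of elements sent and
received in that round) is at most `S_i + k·P`. -/
theorem equalRounds_total_cost_bound
    (P : ℕ) (hP : 1 ≤ P) (k : ℕ) (hk : 1 ≤ k)
    (s : Fin P → Fin P → ℕ) (i : Fin P)
    (S : ℕ) (hS : S = ∑ j, s i j) (hrecv : ∑ j, s j i = S) :
    ∑ r ∈ Finset.Icc 1 k,
      max
        (∑ j, (⌈((r * s i j : ℕ) : ℚ) / (k : ℚ)⌉
          - ⌈(((r - 1) * s i j : ℕ) : ℚ) / (k : ℚ)⌉))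
        (∑ j, (⌈((r * s j i : ℕ) : ℚ) / (k : ℚ)⌉
          - ⌈(((r - 1) * s j i : ℕ) : ℚ) / (k : ℚ)⌉))
      ≤ (S : ℤ) + (k : ℤ) * (P : ℤ) := by
  have hkQ : (0 : ℚ) < (k : ℚ) := by exact_mod_cast hk
  have hk0 : (k : ℚ) ≠ 0 := ne_of_gt hkQ
  -- key per-round bound
  have key : ∀ t : Fin P → ℕ, (∑ j, t j = S) → ∀ r ∈ Finset.Icc 1 k,
      ((∑ j, (⌈((r * t j : ℕ) : ℚ) / (k : ℚ)⌉
        - ⌈(((r - 1) * t j : ℕ) : ℚ) / (k : ℚ)⌉) : ℤ) : ℚ)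
        ≤ (S : ℚ) / (k : ℚ) + (P : ℚ) := by
    intro t ht r hr
    have hr1 : 1 ≤ r := (Finset.mem_Icc.mp hr).1
    have step : ∀ j, (⌈((r * t j : ℕ) : ℚ) / (k : ℚ)⌉
        - ⌈(((r - 1) * t j : ℕ) : ℚ) / (k : ℚ)⌉) ≤ ⌈((t j : ℚ)) / (k : ℚ)⌉ := by
      intro j
      have hsplit : ((r * t j : ℕ) : ℚ) / (k : ℚ)
          = (((r - 1) * t j : ℕ) : ℚ) / (k : ℚ) + ((t j : ℚ)) / (k : ℚ) := by
        rw [← add_div]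
        congr 1
        have h1 : r * t j = (r - 1) * t j + t j := by
          conv_lhs => rw [show r = (r - 1) + 1 from by omega]
          rw [Nat.succ_mul]
        rw [h1]; push_cast; ring
      rw [hsplit]
      have := Int.ceil_add_le ((((r - 1) * t j : ℕ) : ℚ) / (k : ℚ)) (((t j : ℚ)) / (k : ℚ))
      omega
    calc ((∑ j, (⌈((r * t j : ℕ) : ℚ) / (k : ℚ)⌉
        - ⌈(((r - 1) * t j : ℕ) : ℚ) / (k : ℚ)⌉) : ℤ) : ℚ)
        ≤ ((∑ j, ⌈((t j : ℚ)) / (k : ℚ)⌉ : ℤ) : ℚ) := by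
          exact_mod_cast Finset.sum_le_sum (fun j _ => step j)
      _ = ∑ j, ((⌈((t j : ℚ)) / (k : ℚ)⌉ : ℤ) : ℚ) := by rw [Int.cast_sum]
      _ ≤ ∑ j, (((t j : ℚ)) / (k : ℚ) + 1) := by
          refine Finset.sum_le_sum (fun j _ => ?_)
          exact le_of_lt (Int.ceil_lt_add_one _)
      _ = (S : ℚ) / (k : ℚ) + (P : ℚ) := by
          rw [Finset.sum_add_distrib, ← Finset.sum_div]
          have h2 : (∑ j, ((t j : ℚ))) = (S : ℚ) := by exact_mod_cast ht
          rw [h2]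
          simp [Finset.card_univ]
  have main : ((∑ r ∈ Finset.Icc 1 k,
      max
        (∑ j, (⌈((r * s i j : ℕ) : ℚ) / (k : ℚ)⌉
          - ⌈(((r - 1) * s i j : ℕ) : ℚ) / (k : ℚ)⌉))
        (∑ j, (⌈((r * s j i : ℕ) : ℚ) / (k : ℚ)⌉
          - ⌈(((r - 1) * s j i : ℕ) : ℚ) / (k : ℚ)⌉)) : ℤ) : ℚ)
      ≤ (S : ℚ) + (k : ℚ) * (P : ℚ) := by
    have hcard : (Finset.Icc 1 k).card = k := by simp
    calc ((∑ r ∈ Finset.Icc 1 k, _ : ℤ) : ℚ)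
        = ∑ r ∈ Finset.Icc 1 k, ((max
          (∑ j, (⌈((r * s i j : ℕ) : ℚ) / (k : ℚ)⌉
            - ⌈(((r - 1) * s i j : ℕ) : ℚ) / (k : ℚ)⌉))
          (∑ j, (⌈((r * s j i : ℕ) : ℚ) / (k : ℚ)⌉
            - ⌈(((r - 1) * s j i : ℕ) : ℚ) / (k : ℚ)⌉)) : ℤ) : ℚ) := by
          push_cast; ring
      _ ≤ ∑ r ∈ Finset.Icc 1 k, ((S : ℚ) / (k : ℚ) + (P : ℚ)) := by
          refine Finset.sum_le_sum (fun r hr => ?_)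
          rw [Int.cast_max]
          exact max_le (key (fun j => s i j) hS.symm r hr) (key (fun j => s j i) hrecv r hr)
      _ = (k : ℚ) * ((S : ℚ) / (k : ℚ) + (P : ℚ)) := by
          rw [Finset.sum_const, hcard]; ring
      _ = (S : ℚ) + (k : ℚ) * (P : ℚ) := by field_simp
  exact_mod_cast main
end

section
/- Throw n balls independently and uniformly at random into n bins (n a positive integer). Then for every natural number k with 1 ≤ k ≤ n, the probability that some bin receives at least k balls satisfies ℙ( max_{1 ≤ b ≤ n} (load of bin b) ≥ k ) ≤ n/k!. -/
open Finset

lemma bib_card_fixed_le (n : ℕ) (b : Fin n) (S : Finset (Fin n)) :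
    (Finset.univ.filter (fun ω : Fin n → Fin n => ∀ a ∈ S, ω a = b)).card
      ≤ n ^ (n - S.card) := by
  classical
  have h := Finset.card_le_card_of_injOn
    (f := fun (ω : Fin n → Fin n) (a : (↑(Sᶜ) : Set (Fin n))) => ω a)
    (s := Finset.univ.filter (fun ω : Fin n → Fin n => ∀ a ∈ S, ω a = b))
    (t := Finset.univ) (fun _ _ => Finset.mem_univ _) ?_
  · calc _ ≤ (Finset.univ : Finset ((↑(Sᶜ) : Set (Fin n)) → Fin n)).card := h
      _ = n ^ (n - S.card) := by
        simp [Finset.card_univ, Fintype.card_fun, Finset.card_compl]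
  · intro ω1 h1 ω2 h2 heq
    simp only [Finset.coe_filter, Set.mem_setOf_eq, Finset.mem_univ, true_and] at h1 h2
    funext a
    by_cases ha : a ∈ S
    · rw [h1 a ha, h2 a ha]
    · exact congrFun heq ⟨a, by simpa using ha⟩

lemma bib_card_event_le (n k : ℕ) (hk1 : 1 ≤ k) :
    (Finset.univ.filter (fun ω : Fin n → Fin n =>
        k ≤ Finset.univ.sup
          (fun b : Fin n => (Finset.univ.filter (fun a => ω a = b)).card))).card
      ≤ n * n.choose k * n ^ (n - k) := by
  classical
  have hsub : (Finset.univ.filter (fun ω : Fin n → Fin n =>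
        k ≤ Finset.univ.sup
          (fun b : Fin n => (Finset.univ.filter (fun a => ω a = b)).card)))
      ⊆ Finset.univ.biUnion (fun b : Fin n =>
          (Finset.powersetCard k Finset.univ).biUnion (fun S =>
            Finset.univ.filter (fun ω : Fin n → Fin n => ∀ a ∈ S, ω a = b))) := by
    intro ω hω
    simp only [Finset.mem_filter, Finset.mem_univ, true_and] at hω
    rw [Finset.le_sup_iff (by omega : (0:ℕ) < k)] at hω
    obtain ⟨b, -, hb⟩ := hω
    obtain ⟨S, hS, hScard⟩ := Finset.exists_subset_card_eq hb
    simp only [Finset.mem_biUnion, Finset.mem_univ, true_and, Finset.mem_powersetCard,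
      Finset.mem_filter]
    exact ⟨b, ⟨S, ⟨Finset.subset_univ _, hScard⟩, fun a ha =>
      (Finset.mem_filter.mp (hS ha)).2⟩⟩
  calc _ ≤ _ := Finset.card_le_card hsub
    _ ≤ ∑ b : Fin n, ((Finset.powersetCard k Finset.univ).biUnion (fun S =>
          Finset.univ.filter (fun ω : Fin n → Fin n => ∀ a ∈ S, ω a = b))).card :=
        Finset.card_biUnion_le
    _ ≤ ∑ b : Fin n, ∑ S ∈ Finset.powersetCard k Finset.univ,
          (Finset.univ.filter (fun ω : Fin n → Fin n => ∀ a ∈ S, ω a = b)).card :=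
        Finset.sum_le_sum (fun _ _ => Finset.card_biUnion_le)
    _ ≤ ∑ b : Fin n, ∑ S ∈ Finset.powersetCard k Finset.univ, n ^ (n - k) := by
        refine Finset.sum_le_sum fun b _ => Finset.sum_le_sum fun S hS => ?_
        have := bib_card_fixed_le n b S
        rwa [(Finset.mem_powersetCard.mp hS).2] at this
    _ = n * n.choose k * n ^ (n - k) := by
        simp [Finset.sum_const, Finset.card_powersetCard, Finset.card_univ, mul_assoc]

/-- Balls into bins: if `n` balls are thrown independently and uniformly at
random into `n` bins (a uniformly random function `Fin n → Fin n`), then for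
`1 ≤ k ≤ n` the probability that some bin receives at least `k` balls is at
most `n / k!`. -/
theorem balls_into_bins_max_load_tail
    (n : ℕ) [NeZero n] (k : ℕ) (hk1 : 1 ≤ k) (hkn : k ≤ n) :
    (((PMF.uniformOfFintype (Fin n → Fin n)).toMeasure
        {ω : Fin n → Fin n |
          k ≤ Finset.univ.sup
                (fun b : Fin n => (Finset.univ.filter (fun a => ω a = b)).card)}).toReal)
      ≤ (n : ℝ) / (k.factorial : ℝ) := by
  set s : Set (Fin n → Fin n) := {ω : Fin n → Fin n |
          k ≤ Finset.univ.sup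
                (fun b : Fin n => (Finset.univ.filter (fun a => ω a = b)).card)} with hs
  have hms : MeasurableSet s := (Set.toFinite s).measurableSet
  rw [PMF.toMeasure_uniformOfFintype_apply s hms]
  simp only [← Nat.card_eq_fintype_card]
  have hcard : Nat.card s = (Finset.univ.filter (fun ω : Fin n → Fin n =>
        k ≤ Finset.univ.sup
          (fun b : Fin n => (Finset.univ.filter (fun a => ω a = b)).card))).card := by
    rw [Nat.card_eq_fintype_card, ← Set.toFinset_card]
    congr 1
    ext ω
    simp [hs]
  -- key nat inequality
  have hn0 : 0 < n := Nat.pos_of_ne_zero (NeZero.ne n)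
  have hkey : Nat.card s * k.factorial ≤ n * Nat.card (Fin n → Fin n) := by
    rw [hcard, Nat.card_eq_fintype_card, Fintype.card_fun, Fintype.card_fin]
    calc (Finset.univ.filter (fun ω : Fin n → Fin n =>
        k ≤ Finset.univ.sup
          (fun b : Fin n => (Finset.univ.filter (fun a => ω a = b)).card))).card * k.factorial
        ≤ (n * n.choose k * n ^ (n - k)) * k.factorial :=
          Nat.mul_le_mul_right _ (bib_card_event_le n k hk1)
      _ = n * ((k.factorial * n.choose k) * n ^ (n - k)) := by ring
      _ ≤ n * (n ^ k * n ^ (n - k)) := by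
          refine Nat.mul_le_mul_left _ (Nat.mul_le_mul_right _ ?_)
          rw [← Nat.descFactorial_eq_factorial_mul_choose]
          exact Nat.descFactorial_le_pow n k
      _ = n * n ^ n := by rw [← pow_add, Nat.add_sub_cancel' hkn]
  -- transfer to reals
  have hpos : (0:ℝ) < (Nat.card (Fin n → Fin n) : ℝ) := by
    have : 0 < Nat.card (Fin n → Fin n) := Nat.card_pos
    exact_mod_cast this
  have hfpos : (0:ℝ) < (k.factorial : ℝ) := by exact_mod_cast k.factorial_pos
  rw [ENNReal.toReal_div, ENNReal.toReal_natCast, ENNReal.toReal_natCast, div_le_div_iff₀ hpos hfpos]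
  exact_mod_cast hkey
end
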